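/- Define Ψ(x) = Ω(1/x, 1/(2x)) for x > 0, where Ω(x,y) = ∑_{n∈ℤ} max(0, 1 - |n·x - y|)². If m is a positive integer and x ∈ [m - 1/2, m + 1/2], then Ψ(x) = 2m - 2m²/x + m(4m² - 1)/(6x²). -/

import Mathlib

/-- `Ω(x,y) = ∑_{n∈ℤ} max(0, 1 - |n·x - y|)²`. -/
noncomputable def Omega (x y : ℝ) : ℝ := ∑' n : ℤ, (max 0 (1 - |(n : ℝ) * x - y|)) ^ 2

/-- `Ψ(x) = Ω(1/x, 1/(2x))` for `x > 0`. -/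
noncomputable def Psi (x : ℝ) : ℝ := Omega (1 / x) (1 / (2 * x))

lemma key_sum (x : ℝ) (hx : x ≠ 0) (M : ℕ) :
    ∑ n ∈ Finset.Icc (1 - (M:ℤ)) (M:ℤ), (1 - |2*(n:ℝ)-1| / (2*x))^2
      = 2*M - 2*(M:ℝ)^2/x + M*(4*(M:ℝ)^2-1)/(6*x^2) := by
  induction M with
  | zero => simp
  | succ M ih =>
    have hset : Finset.Icc (1 - ((M+1:ℕ):ℤ)) ((M+1:ℕ):ℤ)
        = insert (-(M:ℤ)) (insert ((M:ℤ)+1) (Finset.Icc (1 - (M:ℤ)) (M:ℤ))) := by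
      ext n
      simp only [Finset.mem_Icc, Finset.mem_insert]
      push_cast
      omega
    have h1 : -(M:ℤ) ∉ insert ((M:ℤ)+1) (Finset.Icc (1 - (M:ℤ)) (M:ℤ)) := by
      simp only [Finset.mem_Icc, Finset.mem_insert]
      omega
    have h2 : (M:ℤ)+1 ∉ Finset.Icc (1 - (M:ℤ)) (M:ℤ) := by
      simp only [Finset.mem_Icc]
      omega
    rw [hset, Finset.sum_insert h1, Finset.sum_insert h2, ih]
    have e1 : |2 * -(M:ℝ) - 1| = 2*(M:ℝ)+1 := by
      rw [show 2*(-(M:ℝ))-1 = -(2*(M:ℝ)+1) by ring, abs_neg,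
        abs_of_nonneg (by positivity)]
    have e2 : |2 * ((M:ℝ)+1) - 1| = 2*(M:ℝ)+1 := by
      rw [show 2*((M:ℝ)+1)-1 = 2*(M:ℝ)+1 by ring, abs_of_nonneg (by positivity)]
    push_cast
    rw [e1, e2]
    field_simp
    ring

theorem stmt_8 (m : ℕ) (hm : 1 ≤ m) (x : ℝ)
    (h1 : (m : ℝ) - 1 / 2 ≤ x) (h2 : x ≤ (m : ℝ) + 1 / 2) :
    Psi x = 2 * m - 2 * m ^ 2 / x + m * (4 * m ^ 2 - 1) / (6 * x ^ 2) := by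
  have hm1 : (1:ℝ) ≤ (m:ℝ) := by exact_mod_cast hm
  have hx : 0 < x := by linarith
  have habs : ∀ n : ℤ, |(n:ℝ) * (1/x) - 1/(2*x)| = |2*(n:ℝ)-1| / (2*x) := by
    intro n
    rw [show (n:ℝ) * (1/x) - 1/(2*x) = (2*(n:ℝ)-1) / (2*x) by field_simp,
      abs_div, abs_of_pos (show (0:ℝ) < 2*x by positivity)]
  have hzero : ∀ n : ℤ, n ∉ Finset.Icc (1 - (m:ℤ)) (m:ℤ) →
      (max 0 (1 - |(n:ℝ) * (1/x) - 1/(2*x)|))^2 = 0 := by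
    intro n hn
    have hn' : (m:ℤ) + 1 ≤ n ∨ n ≤ -(m:ℤ) := by
      simp only [Finset.mem_Icc] at hn; omega
    have hb : 2*x ≤ |2*(n:ℝ)-1| := by
      rcases hn' with h | h
      · have : (m:ℝ) + 1 ≤ (n:ℝ) := by exact_mod_cast h
        rw [abs_of_nonneg (by linarith)]; linarith
      · have : (n:ℝ) ≤ -(m:ℝ) := by exact_mod_cast h
        rw [abs_of_nonpos (by linarith)]; linarith
    have hle : (1:ℝ) ≤ |2*(n:ℝ)-1| / (2*x) := by
      rw [le_div_iff₀ (show (0:ℝ) < 2*x by positivity)]; linarith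
    rw [habs n, max_eq_left (by linarith)]
    norm_num
  have hval : ∀ n ∈ Finset.Icc (1 - (m:ℤ)) (m:ℤ),
      (max 0 (1 - |(n:ℝ) * (1/x) - 1/(2*x)|))^2 = (1 - |2*(n:ℝ)-1| / (2*x))^2 := by
    intro n hn
    simp only [Finset.mem_Icc] at hn
    have hlb : (1:ℝ) - (m:ℝ) ≤ (n:ℝ) := by exact_mod_cast hn.1
    have hub : (n:ℝ) ≤ (m:ℝ) := by exact_mod_cast hn.2
    have hb : |2*(n:ℝ)-1| ≤ 2*x := by
      rw [abs_le]; constructor <;> linarith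
    have hle : |2*(n:ℝ)-1| / (2*x) ≤ 1 := by
      rw [div_le_one (show (0:ℝ) < 2*x by positivity)]; linarith
    rw [habs n, max_eq_right (by linarith)]
  have := key_sum x hx.ne' m
  rw [Psi, Omega, tsum_eq_sum hzero, Finset.sum_congr rfl hval, this]
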